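/- For all real N₁, N₂, N₃, N₄ ≥ 2 and all Δ > 0, the counting function 𝒜_−(N₁,N₂,N₃,N₄;Δ) := #{(n₁,n₂,n₃,n₄) ∈ ℕ⁴ : N_j < n_j ≤ 2N_j (j=1,2,3,4), |n₁^{1/2} + n₂^{1/2} − n₃^{1/2} − n₄^{1/2}| < Δ} satisfies 𝒜_−(N₁,N₂,N₃,N₄;Δ) ≤ 9 ∏_{j=1}^4 𝒜_−(N_j,N_j,N_j,N_j;Δ)^{1/4}. -/

import Mathlib

open Real Finset
open scoped Classical

/-- `Aminus N₁ N₂ N₃ N₄ Δ` counts quadruples of positive integers `(n₁,n₂,n₃,n₄)`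
with `Nⱼ < nⱼ ≤ 2Nⱼ` and `|√n₁ + √n₂ − √n₃ − √n₄| < Δ`. -/
noncomputable def Aminus (N₁ N₂ N₃ N₄ Δ : ℝ) : ℕ :=
  Nat.card {q : ℕ × ℕ × ℕ × ℕ //
    (N₁ < q.1 ∧ (q.1 : ℝ) ≤ 2 * N₁) ∧ (N₂ < q.2.1 ∧ (q.2.1 : ℝ) ≤ 2 * N₂) ∧
    (N₃ < q.2.2.1 ∧ (q.2.2.1 : ℝ) ≤ 2 * N₃) ∧ (N₄ < q.2.2.2 ∧ (q.2.2.2 : ℝ) ≤ 2 * N₄) ∧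
    |Real.sqrt q.1 + Real.sqrt q.2.1 - Real.sqrt q.2.2.1 - Real.sqrt q.2.2.2| < Δ}


lemma card_filter_real {γ : Type*} (S : Finset γ) (p : γ → Prop) [DecidablePred p] :
    (((S.filter p).card : ℝ)) = ∑ x ∈ S, if p x then (1:ℝ) else 0 := by
  rw [Finset.card_filter]; push_cast; rfl

lemma floor_eq_imp {Δ a b : ℝ} (hΔ : 0 < Δ) (h : ⌊a/Δ⌋ = ⌊b/Δ⌋) : |a - b| < Δ := by
  have ha1 := Int.floor_le (a/Δ)
  have ha2 := Int.lt_floor_add_one (a/Δ)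
  have hb1 := Int.floor_le (b/Δ)
  have hb2 := Int.lt_floor_add_one (b/Δ)
  rw [h] at ha1 ha2
  have ea : a/Δ*Δ = a := div_mul_cancel₀ a hΔ.ne'
  have eb : b/Δ*Δ = b := div_mul_cancel₀ b hΔ.ne'
  rw [abs_lt]
  constructor <;> nlinarith

lemma floor_sum_bounds {Δ a b : ℝ} (hΔ : 0 < Δ) (h : |a + b| < Δ) :
    -2 ≤ ⌊a/Δ⌋ + ⌊b/Δ⌋ ∧ ⌊a/Δ⌋ + ⌊b/Δ⌋ ≤ 0 := by
  rw [abs_lt] at h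
  have ha1 := Int.floor_le (a/Δ)
  have ha2 := Int.lt_floor_add_one (a/Δ)
  have hb1 := Int.floor_le (b/Δ)
  have hb2 := Int.lt_floor_add_one (b/Δ)
  have ea : a/Δ*Δ = a := div_mul_cancel₀ a hΔ.ne'
  have eb : b/Δ*Δ = b := div_mul_cancel₀ b hΔ.ne'
  constructor
  · have h3 : ((-3 : ℤ) : ℝ) < ((⌊a/Δ⌋ + ⌊b/Δ⌋ : ℤ) : ℝ) := by push_cast; nlinarith
    have h4 : (-3 : ℤ) < ⌊a/Δ⌋ + ⌊b/Δ⌋ := by exact_mod_cast h3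
    omega
  · have h3 : ((⌊a/Δ⌋ + ⌊b/Δ⌋ : ℤ) : ℝ) < ((1 : ℤ) : ℝ) := by push_cast; nlinarith
    have h4 : ⌊a/Δ⌋ + ⌊b/Δ⌋ < 1 := by exact_mod_cast h3
    omega

lemma conv_card {α β : Type*} (P : Finset α) (Q : Finset β) (u : α → ℤ) (v : β → ℤ) (m : ℤ) :
    (((P ×ˢ Q).filter fun x => u x.1 + v x.2 = m).card : ℝ)
      = ∑ k ∈ P.image u,
          ((P.filter fun p => u p = k).card : ℝ) * ((Q.filter fun q => v q = m - k).card : ℝ) := by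
  rw [card_filter_real, Finset.sum_product]
  have h1 : ∀ p ∈ P, (∑ q ∈ Q, if u p + v q = m then (1:ℝ) else 0)
      = ((Q.filter fun q => v q = m - u p).card : ℝ) := by
    intro p _
    rw [card_filter_real]
    refine Finset.sum_congr rfl fun q _ => ?_
    have h : (u p + v q = m) ↔ (v q = m - u p) := by omega
    rw [if_congr h rfl rfl]
  rw [Finset.sum_congr rfl h1]
  rw [← Finset.sum_fiberwise_of_maps_to (t := P.image u)
        (fun p hp => Finset.mem_image_of_mem u hp)
        (fun p => ((Q.filter fun q => v q = m - u p).card : ℝ))]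
  refine Finset.sum_congr rfl fun k hk => ?_
  have h2 : ∀ p ∈ P.filter (fun p => u p = k),
      ((Q.filter fun q => v q = m - u p).card : ℝ)
        = ((Q.filter fun q => v q = m - k).card : ℝ) := by
    intro p hp
    rw [(Finset.mem_filter.mp hp).2]
  rw [Finset.sum_congr rfl h2, Finset.sum_const, nsmul_eq_mul]

lemma diag_bound {α : Type*} (P : Finset α) (f : α → ℝ) {Δ : ℝ} (hΔ : 0 < Δ) :
    ∑ k ∈ P.image (fun p => ⌊f p / Δ⌋),
        ((P.filter fun p => ⌊f p / Δ⌋ = k).card : ℝ)^2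
      ≤ (((P ×ˢ P).filter fun x => |f x.1 - f x.2| < Δ).card : ℝ) := by
  have e1 := conv_card P P (fun p => ⌊f p / Δ⌋) (fun p => -⌊f p / Δ⌋) 0
  have e2 : ∀ k ∈ P.image (fun p => ⌊f p / Δ⌋),
      ((P.filter fun p => ⌊f p / Δ⌋ = k).card : ℝ)
          * ((P.filter fun p => -⌊f p / Δ⌋ = 0 - k).card : ℝ)
        = ((P.filter fun p => ⌊f p / Δ⌋ = k).card : ℝ)^2 := by
    intro k _
    have : (P.filter fun p => -⌊f p / Δ⌋ = 0 - k) = (P.filter fun p => ⌊f p / Δ⌋ = k) := by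
      apply Finset.filter_congr
      intro p _
      constructor <;> (intro h; omega)
    rw [this]; ring
  rw [Finset.sum_congr rfl e2] at e1
  rw [← e1]
  have hsub : ((P ×ˢ P).filter fun x => (fun p => ⌊f p / Δ⌋) x.1 + (fun p => -⌊f p / Δ⌋) x.2 = 0)
      ⊆ ((P ×ˢ P).filter fun x => |f x.1 - f x.2| < Δ) := by
    apply Finset.monotone_filter_right
    intro x _ hx
    simp only at hx
    have : ⌊f x.1 / Δ⌋ = ⌊f x.2 / Δ⌋ := by omega
    exact floor_eq_imp hΔ this
  exact_mod_cast Finset.card_le_card hsub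

lemma shift_bound {β : Type*} (Q : Finset β) (v : β → ℤ) (K : Finset ℤ) (m : ℤ) :
    ∑ k ∈ K, ((Q.filter fun q => v q = m - k).card : ℝ)^2
      ≤ ∑ l ∈ Q.image v, ((Q.filter fun q => v q = l).card : ℝ)^2 := by
  have e1 : ∑ k ∈ K, ((Q.filter fun q => v q = m - k).card : ℝ)^2
      = ∑ l ∈ K.image (fun k => m - k), ((Q.filter fun q => v q = l).card : ℝ)^2 := by
    rw [Finset.sum_image (by intro x _ y _ h; have h' : m - x = m - y := h; omega)]
  rw [e1]
  set S := K.image (fun k => m - k)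
  have hz : ∀ l, l ∉ Q.image v → ((Q.filter fun q => v q = l).card : ℝ)^2 = 0 := by
    intro l hl
    have : (Q.filter fun q => v q = l) = ∅ := by
      rw [Finset.filter_eq_empty_iff]
      intro q hq h
      exact hl (Finset.mem_image.mpr ⟨q, hq, h⟩)
    rw [this]; simp
  have e2 : ∑ l ∈ S, ((Q.filter fun q => v q = l).card : ℝ)^2
      = ∑ l ∈ S ∩ Q.image v, ((Q.filter fun q => v q = l).card : ℝ)^2 := by
    refine (Finset.sum_subset Finset.inter_subset_left ?_).symm
    intro l hl hnl
    exact hz l (fun h => hnl (Finset.mem_inter.mpr ⟨hl, h⟩))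
  rw [e2]
  exact Finset.sum_le_sum_of_subset_of_nonneg Finset.inter_subset_right
    (fun l _ _ => sq_nonneg _)

lemma binCS {α β : Type*} (P : Finset α) (Q : Finset β) (f : α → ℝ) (g : β → ℝ)
    {Δ : ℝ} (hΔ : 0 < Δ) :
    ((((P ×ˢ Q).filter fun x => |f x.1 + g x.2| < Δ).card : ℝ)) ≤
      3 * Real.sqrt (((P ×ˢ P).filter fun x => |f x.1 - f x.2| < Δ).card)
        * Real.sqrt (((Q ×ˢ Q).filter fun x => |g x.1 - g x.2| < Δ).card) := by
  have hBnn : (0:ℝ) ≤ (((P ×ˢ P).filter fun x => |f x.1 - f x.2| < Δ).card : ℝ) := by positivity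
  have hCnn : (0:ℝ) ≤ (((Q ×ˢ Q).filter fun x => |g x.1 - g x.2| < Δ).card : ℝ) := by positivity
  have key : ∀ m : ℤ, (((P ×ˢ Q).filter fun x => ⌊f x.1 / Δ⌋ + ⌊g x.2 / Δ⌋ = m).card : ℝ)
      ≤ Real.sqrt (((P ×ˢ P).filter fun x => |f x.1 - f x.2| < Δ).card)
        * Real.sqrt (((Q ×ˢ Q).filter fun x => |g x.1 - g x.2| < Δ).card) := by
    intro m
    rw [conv_card P Q (fun p => ⌊f p / Δ⌋) (fun q => ⌊g q / Δ⌋) m]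
    have hnn : (0:ℝ) ≤ ∑ k ∈ P.image (fun p => ⌊f p / Δ⌋),
        ((P.filter fun p => ⌊f p / Δ⌋ = k).card : ℝ)
          * ((Q.filter fun q => ⌊g q / Δ⌋ = m - k).card : ℝ) := by
      apply Finset.sum_nonneg; intro k _; positivity
    have cs := Finset.sum_mul_sq_le_sq_mul_sq (P.image (fun p => ⌊f p / Δ⌋))
        (fun k => ((P.filter fun p => ⌊f p / Δ⌋ = k).card : ℝ))
        (fun k => ((Q.filter fun q => ⌊g q / Δ⌋ = m - k).card : ℝ))
    have h2 : ∑ k ∈ P.image (fun p => ⌊f p / Δ⌋),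
        ((Q.filter fun q => ⌊g q / Δ⌋ = m - k).card : ℝ)^2
          ≤ (((Q ×ˢ Q).filter fun x => |g x.1 - g x.2| < Δ).card : ℝ) :=
      le_trans (shift_bound Q (fun q => ⌊g q / Δ⌋) _ m) (diag_bound Q g hΔ)
    have h1 := diag_bound P f hΔ
    calc ∑ k ∈ P.image (fun p => ⌊f p / Δ⌋),
          ((P.filter fun p => ⌊f p / Δ⌋ = k).card : ℝ)
            * ((Q.filter fun q => ⌊g q / Δ⌋ = m - k).card : ℝ)
        = Real.sqrt ((∑ k ∈ P.image (fun p => ⌊f p / Δ⌋),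
            ((P.filter fun p => ⌊f p / Δ⌋ = k).card : ℝ)
              * ((Q.filter fun q => ⌊g q / Δ⌋ = m - k).card : ℝ))^2) := (Real.sqrt_sq hnn).symm
      _ ≤ Real.sqrt ((∑ k ∈ P.image (fun p => ⌊f p / Δ⌋),
            ((P.filter fun p => ⌊f p / Δ⌋ = k).card : ℝ)^2)
            * (∑ k ∈ P.image (fun p => ⌊f p / Δ⌋),
            ((Q.filter fun q => ⌊g q / Δ⌋ = m - k).card : ℝ)^2)) := Real.sqrt_le_sqrt cs
      _ ≤ Real.sqrt ((((P ×ˢ P).filter fun x => |f x.1 - f x.2| < Δ).card : ℝ)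
            * (((Q ×ˢ Q).filter fun x => |g x.1 - g x.2| < Δ).card : ℝ)) := by
          apply Real.sqrt_le_sqrt
          apply mul_le_mul h1 h2 (Finset.sum_nonneg fun k _ => sq_nonneg _) hBnn
      _ = _ := Real.sqrt_mul hBnn _
  have hsub : (P ×ˢ Q).filter (fun x => |f x.1 + g x.2| < Δ) ⊆
      (((P ×ˢ Q).filter fun x => ⌊f x.1 / Δ⌋ + ⌊g x.2 / Δ⌋ = -2)
        ∪ ((P ×ˢ Q).filter fun x => ⌊f x.1 / Δ⌋ + ⌊g x.2 / Δ⌋ = -1))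
        ∪ ((P ×ˢ Q).filter fun x => ⌊f x.1 / Δ⌋ + ⌊g x.2 / Δ⌋ = 0) := by
    intro x hx
    rw [Finset.mem_filter] at hx
    obtain ⟨hm, hc⟩ := hx
    obtain ⟨hl, hr⟩ := floor_sum_bounds hΔ hc
    have h2 : ⌊f x.1 / Δ⌋ + ⌊g x.2 / Δ⌋ = -2 ∨ ⌊f x.1 / Δ⌋ + ⌊g x.2 / Δ⌋ = -1
        ∨ ⌊f x.1 / Δ⌋ + ⌊g x.2 / Δ⌋ = 0 := by omega
    simp only [Finset.mem_union, Finset.mem_filter]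
    tauto
  have hcard := Finset.card_le_card hsub
  have hcard2 := le_trans hcard (le_trans (Finset.card_union_le _ _)
    (Nat.add_le_add_right (Finset.card_union_le _ _) _))
  have hreal : (((P ×ˢ Q).filter fun x => |f x.1 + g x.2| < Δ).card : ℝ)
      ≤ (((P ×ˢ Q).filter fun x => ⌊f x.1 / Δ⌋ + ⌊g x.2 / Δ⌋ = -2).card : ℝ)
        + (((P ×ˢ Q).filter fun x => ⌊f x.1 / Δ⌋ + ⌊g x.2 / Δ⌋ = -1).card : ℝ)
        + (((P ×ˢ Q).filter fun x => ⌊f x.1 / Δ⌋ + ⌊g x.2 / Δ⌋ = 0).card : ℝ) := by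
    exact_mod_cast hcard2
  calc (((P ×ˢ Q).filter fun x => |f x.1 + g x.2| < Δ).card : ℝ)
      ≤ _ := hreal
    _ ≤ Real.sqrt _ * Real.sqrt _ + Real.sqrt _ * Real.sqrt _ + Real.sqrt _ * Real.sqrt _ :=
        add_le_add (add_le_add (key (-2)) (key (-1))) (key 0)
    _ = 3 * Real.sqrt (((P ×ˢ P).filter fun x => |f x.1 - f x.2| < Δ).card)
        * Real.sqrt (((Q ×ˢ Q).filter fun x => |g x.1 - g x.2| < Δ).card) := by ring

noncomputable def boxN (N : ℝ) : Finset ℕ :=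
  (Finset.range (⌊2*N⌋₊ + 1)).filter fun n => N < (n:ℝ) ∧ (n:ℝ) ≤ 2*N

lemma mem_boxN {N : ℝ} {n : ℕ} : n ∈ boxN N ↔ (N < (n:ℝ) ∧ (n:ℝ) ≤ 2*N) := by
  unfold boxN
  simp only [Finset.mem_filter, Finset.mem_range, and_iff_right_iff_imp]
  rintro ⟨h1, h2⟩
  exact Nat.lt_succ_of_le (Nat.le_floor h2)

lemma Aminus_eq_card (N₁ N₂ N₃ N₄ Δ : ℝ) :
    Aminus N₁ N₂ N₃ N₄ Δ =
      ((boxN N₁ ×ˢ boxN N₂ ×ˢ boxN N₃ ×ˢ boxN N₄).filter fun q =>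
        |Real.sqrt q.1 + Real.sqrt q.2.1 - Real.sqrt q.2.2.1 - Real.sqrt q.2.2.2| < Δ).card := by
  unfold Aminus
  rw [Nat.card_congr (Equiv.subtypeEquivRight (q := fun q => q ∈
      ((boxN N₁ ×ˢ boxN N₂ ×ˢ boxN N₃ ×ˢ boxN N₄).filter fun q =>
        |Real.sqrt q.1 + Real.sqrt q.2.1 - Real.sqrt q.2.2.1 - Real.sqrt q.2.2.2| < Δ))
      (fun q => by
        simp only [Finset.mem_filter, Finset.mem_product, mem_boxN]
        tauto))]
  rw [Nat.card_eq_fintype_card, Fintype.card_coe]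

lemma cross_card (Ba Bb Bc Bd : Finset ℕ) (Δ : ℝ) :
    (((Ba ×ˢ Bc) ×ˢ (Bb ×ˢ Bd)).filter fun x =>
        |(Real.sqrt x.1.1 - Real.sqrt x.1.2) + (Real.sqrt x.2.1 - Real.sqrt x.2.2)| < Δ).card
    = ((Ba ×ˢ Bb ×ˢ Bc ×ˢ Bd).filter fun q =>
        |Real.sqrt q.1 + Real.sqrt q.2.1 - Real.sqrt q.2.2.1 - Real.sqrt q.2.2.2| < Δ).card := by
  refine Finset.card_bij' (fun x _ => (x.1.1, x.2.1, x.1.2, x.2.2))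
    (fun q _ => ((q.1, q.2.2.1), (q.2.1, q.2.2.2))) ?_ ?_ ?_ ?_
  · intro x hx
    simp only [Finset.mem_filter, Finset.mem_product] at hx ⊢
    obtain ⟨⟨⟨ha, hc⟩, hb, hd⟩, hcond⟩ := hx
    refine ⟨⟨ha, hb, hc, hd⟩, ?_⟩
    have h : Real.sqrt x.1.1 + Real.sqrt x.2.1 - Real.sqrt x.1.2 - Real.sqrt x.2.2
        = (Real.sqrt x.1.1 - Real.sqrt x.1.2) + (Real.sqrt x.2.1 - Real.sqrt x.2.2) := by ring
    rw [h]
    exact hcond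
  · intro q hq
    simp only [Finset.mem_filter, Finset.mem_product] at hq ⊢
    obtain ⟨⟨ha, hb, hc, hd⟩, hcond⟩ := hq
    refine ⟨⟨⟨ha, hc⟩, hb, hd⟩, ?_⟩
    have h : (Real.sqrt q.1 - Real.sqrt q.2.2.1) + (Real.sqrt q.2.1 - Real.sqrt q.2.2.2)
        = Real.sqrt q.1 + Real.sqrt q.2.1 - Real.sqrt q.2.2.1 - Real.sqrt q.2.2.2 := by ring
    rw [h]
    exact hcond
  · intro x hx; rfl
  · intro q hq; rfl

lemma pairs_card (Ba Bb : Finset ℕ) (Δ : ℝ) :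
    (((Ba ×ˢ Bb) ×ˢ (Ba ×ˢ Bb)).filter fun x =>
        |(Real.sqrt x.1.1 - Real.sqrt x.1.2) - (Real.sqrt x.2.1 - Real.sqrt x.2.2)| < Δ).card
    = ((Ba ×ˢ Bb ×ˢ Ba ×ˢ Bb).filter fun q =>
        |Real.sqrt q.1 + Real.sqrt q.2.1 - Real.sqrt q.2.2.1 - Real.sqrt q.2.2.2| < Δ).card := by
  refine Finset.card_bij' (fun x _ => (x.1.1, x.2.2, x.2.1, x.1.2))
    (fun q _ => ((q.1, q.2.2.2), (q.2.2.1, q.2.1))) ?_ ?_ ?_ ?_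
  · intro x hx
    simp only [Finset.mem_filter, Finset.mem_product] at hx ⊢
    obtain ⟨⟨⟨ha, hb⟩, hc, hd⟩, hcond⟩ := hx
    refine ⟨⟨ha, hd, hc, hb⟩, ?_⟩
    have h : Real.sqrt x.1.1 + Real.sqrt x.2.2 - Real.sqrt x.2.1 - Real.sqrt x.1.2
        = (Real.sqrt x.1.1 - Real.sqrt x.1.2) - (Real.sqrt x.2.1 - Real.sqrt x.2.2) := by ring
    rw [h]
    exact hcond
  · intro q hq
    simp only [Finset.mem_filter, Finset.mem_product] at hq ⊢
    obtain ⟨⟨ha, hb, hc, hd⟩, hcond⟩ := hq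
    refine ⟨⟨⟨ha, hd⟩, hc, hb⟩, ?_⟩
    have h : (Real.sqrt q.1 - Real.sqrt q.2.2.2) - (Real.sqrt q.2.2.1 - Real.sqrt q.2.1)
        = Real.sqrt q.1 + Real.sqrt q.2.1 - Real.sqrt q.2.2.1 - Real.sqrt q.2.2.2 := by ring
    rw [h]
    exact hcond
  · intro x hx; rfl
  · intro q hq; rfl

lemma step_lemma (Na Nb Nc Nd : ℝ) {Δ : ℝ} (hΔ : 0 < Δ) :
    ((Aminus Na Nb Nc Nd Δ : ℝ)) ≤
      3 * Real.sqrt (Aminus Na Nc Na Nc Δ) * Real.sqrt (Aminus Nb Nd Nb Nd Δ) := by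
  rw [Aminus_eq_card Na Nb Nc Nd, Aminus_eq_card Na Nc Na Nc, Aminus_eq_card Nb Nd Nb Nd]
  rw [← cross_card (boxN Na) (boxN Nb) (boxN Nc) (boxN Nd) Δ,
      ← pairs_card (boxN Na) (boxN Nc) Δ, ← pairs_card (boxN Nb) (boxN Nd) Δ]
  exact binCS (boxN Na ×ˢ boxN Nc) (boxN Nb ×ˢ boxN Nd)
      (fun p => Real.sqrt p.1 - Real.sqrt p.2) (fun q => Real.sqrt q.1 - Real.sqrt q.2) hΔ

theorem Aminus_le_prod (N₁ N₂ N₃ N₄ : ℝ) (h₁ : 2 ≤ N₁) (h₂ : 2 ≤ N₂)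
    (h₃ : 2 ≤ N₃) (h₄ : 2 ≤ N₄) (Δ : ℝ) (hΔ : 0 < Δ) :
    (Aminus N₁ N₂ N₃ N₄ Δ : ℝ) ≤
      9 * (Aminus N₁ N₁ N₁ N₁ Δ : ℝ) ^ ((1:ℝ)/4) * (Aminus N₂ N₂ N₂ N₂ Δ : ℝ) ^ ((1:ℝ)/4)
        * (Aminus N₃ N₃ N₃ N₃ Δ : ℝ) ^ ((1:ℝ)/4) * (Aminus N₄ N₄ N₄ N₄ Δ : ℝ) ^ ((1:ℝ)/4) := by
  have hq : ∀ x : ℝ, 0 ≤ x → Real.sqrt (Real.sqrt x) = x ^ ((1:ℝ)/4) := by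
    intro x hx
    rw [Real.sqrt_eq_rpow, Real.sqrt_eq_rpow, ← Real.rpow_mul hx]
    norm_num
  have s1 := step_lemma N₁ N₂ N₃ N₄ hΔ
  have s2 := step_lemma N₁ N₃ N₁ N₃ hΔ
  have s3 := step_lemma N₂ N₄ N₂ N₄ hΔ
  have e3 : Real.sqrt 3 * Real.sqrt 3 = 3 := Real.mul_self_sqrt (by norm_num)
  calc (Aminus N₁ N₂ N₃ N₄ Δ : ℝ)
      ≤ 3 * Real.sqrt (Aminus N₁ N₃ N₁ N₃ Δ) * Real.sqrt (Aminus N₂ N₄ N₂ N₄ Δ) := s1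
    _ ≤ 3 * Real.sqrt (3 * Real.sqrt (Aminus N₁ N₁ N₁ N₁ Δ) * Real.sqrt (Aminus N₃ N₃ N₃ N₃ Δ))
          * Real.sqrt (3 * Real.sqrt (Aminus N₂ N₂ N₂ N₂ Δ) * Real.sqrt (Aminus N₄ N₄ N₄ N₄ Δ)) := by
        gcongr
    _ = 9 * (Aminus N₁ N₁ N₁ N₁ Δ : ℝ) ^ ((1:ℝ)/4) * (Aminus N₂ N₂ N₂ N₂ Δ : ℝ) ^ ((1:ℝ)/4)
          * (Aminus N₃ N₃ N₃ N₃ Δ : ℝ) ^ ((1:ℝ)/4) * (Aminus N₄ N₄ N₄ N₄ Δ : ℝ) ^ ((1:ℝ)/4) := by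
        rw [Real.sqrt_mul (by positivity) (Real.sqrt (Aminus N₃ N₃ N₃ N₃ Δ)),
            Real.sqrt_mul (by norm_num : (0:ℝ) ≤ 3) (Real.sqrt (Aminus N₁ N₁ N₁ N₁ Δ)),
            Real.sqrt_mul (by positivity) (Real.sqrt (Aminus N₄ N₄ N₄ N₄ Δ)),
            Real.sqrt_mul (by norm_num : (0:ℝ) ≤ 3) (Real.sqrt (Aminus N₂ N₂ N₂ N₂ Δ)),
            hq _ (Nat.cast_nonneg _), hq _ (Nat.cast_nonneg _),
            hq _ (Nat.cast_nonneg _), hq _ (Nat.cast_nonneg _)]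
        linear_combination (3 * (Aminus N₁ N₁ N₁ N₁ Δ : ℝ) ^ ((1:ℝ)/4)
          * (Aminus N₂ N₂ N₂ N₂ Δ : ℝ) ^ ((1:ℝ)/4) * (Aminus N₃ N₃ N₃ N₃ Δ : ℝ) ^ ((1:ℝ)/4)
          * (Aminus N₄ N₄ N₄ N₄ Δ : ℝ) ^ ((1:ℝ)/4)) * e3
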